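/- Finite abelian rack structures on a finite set X are in bijective correspondence with partitions X = X₁ ⊔ ⋯ ⊔ X_r together with families of permutations f_{ij} ∈ Sym(X_i) (1 ≤ i, j ≤ r) such that: (1) f_{ij} f_{ik} = f_{ik} f_{ij} for all i, j, k; (2) the group G_i = ⟨f_{ij} : 1 ≤ j ≤ r⟩ acts transitively on X_i; (3) every element of G_i with a fixed point in X_i is the identity. Under this correspondence, the rack operation is x ◁ y = f_{ij}(x) for x ∈ X_i, y ∈ X_j. The rack is a quandle if and only if f_{ii} = id for all i. -/

import Mathlib

/-- An abelian rack structure on `X`. -/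
structure AbelianRack (X : Type*) where
  op : X → X → X
  self_distrib : ∀ x y z, op (op x y) z = op (op x z) (op y z)
  bij : ∀ y, Function.Bijective fun x => op x y
  abelian : ∀ a b c, op (op a b) c = op (op a c) b

/-- The combinatorial data: a partition of `X` (given as an equivalence relation, the
parts being the classes) together with permutations `f_{ij}` of the part `X_i` (encoded
as permutations of `X` indexed by representatives, fixing the complement of the part,
depending only on the classes of the indices) such that the `f_{ij}` with fixed first
index pairwise commute, the group `G_i = ⟨f_{ij} : j⟩` acts transitively on `X_i`, and
any element of `G_i` with a fixed point in `X_i` is the identity on `X_i`. -/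
structure AbelianRackData (X : Type*) where
  rel : X → X → Prop
  equiv : Equivalence rel
  f : X → X → Equiv.Perm X
  congr : ∀ x x' y y', rel x x' → rel y y' → f x y = f x' y'
  fix_outside : ∀ x y z, ¬ rel x z → f x y z = z
  maps_class : ∀ x y z, rel x z → rel x (f x y z)
  comm : ∀ x y y', f x y * f x y' = f x y' * f x y
  trans : ∀ x a b, rel x a → rel x b →
    ∃ g ∈ Subgroup.closure (Set.range (f x)), g a = b
  free : ∀ x, ∀ g ∈ Subgroup.closure (Set.range (f x)),
    (∃ a, rel x a ∧ g a = a) → ∀ b, rel x b → g b = b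

namespace RackAux

variable {X : Type*}

lemma rack_ext {R S : AbelianRack X} (h : R.op = S.op) : R = S := by
  cases R; cases S; cases h; rfl

lemma data_ext {D E : AbelianRackData X} (h1 : D.rel = E.rel) (h2 : D.f = E.f) :
    D = E := by
  cases D; cases E; cases h1; cases h2; rfl

lemma commute_closure {H : Type*} [Group H] {S : Set H}
    (hS : ∀ a ∈ S, ∀ b ∈ S, Commute a b) :
    ∀ g ∈ Subgroup.closure S, ∀ h ∈ Subgroup.closure S, Commute g h := by
  intro g hg h hh
  exact Subgroup.closure_induction₂ (fun a b ha hb => hS a ha b hb)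
    (fun _ _ => Commute.one_left _) (fun _ _ => Commute.one_right _)
    (fun _ _ _ _ _ _ p q => p.mul_left q) (fun _ _ _ _ _ _ p q => p.mul_right q)
    (fun _ _ _ _ p => p.inv_left) (fun _ _ _ _ p => p.inv_right) hg hh

variable (R : AbelianRack X)

/-- Right translation by `y` as a permutation. -/
noncomputable def σ (y : X) : Equiv.Perm X := Equiv.ofBijective _ (R.bij y)

@[simp] lemma σ_apply (y x : X) : σ R y x = R.op x y := rfl

/-- The group generated by the right translations. -/
def G : Subgroup (Equiv.Perm X) := Subgroup.closure (Set.range (σ R))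

/-- The orbit equivalence relation. -/
def rel (x z : X) : Prop := ∃ g ∈ G R, g x = z

lemma rel_refl (x : X) : rel R x x := ⟨1, one_mem _, rfl⟩

lemma rel_symm {x z : X} (h : rel R x z) : rel R z x := by
  obtain ⟨g, hg, rfl⟩ := h
  exact ⟨g⁻¹, inv_mem hg, Equiv.symm_apply_apply g x⟩

lemma rel_trans {x y z : X} (h : rel R x y) (h' : rel R y z) : rel R x z := by
  obtain ⟨g, hg, rfl⟩ := h; obtain ⟨g', hg', rfl⟩ := h'
  exact ⟨g' * g, mul_mem hg' hg, rfl⟩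

lemma rel_equiv : Equivalence (rel R) := ⟨rel_refl R, rel_symm R, rel_trans R⟩

lemma mem_G_rel {g : Equiv.Perm X} (hg : g ∈ G R) (z : X) : rel R z (g z) := ⟨g, hg, rfl⟩

lemma σ_mem (y : X) : σ R y ∈ G R := Subgroup.subset_closure ⟨y, rfl⟩

lemma key (t b c : X) : R.op t b = R.op t (R.op b c) := by
  obtain ⟨a, rfl⟩ := (R.bij c).2 t
  calc R.op (R.op a c) b = R.op (R.op a b) c := (R.abelian a b c).symm
    _ = R.op (R.op a c) (R.op b c) := R.self_distrib a b c

lemma σ_const {g : Equiv.Perm X} (hg : g ∈ G R) : ∀ b, σ R (g b) = σ R b := by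
  refine Subgroup.closure_induction ?_ (fun b => rfl) ?_ ?_ hg
  · rintro h ⟨c, rfl⟩ b
    ext a
    simp only [σ_apply]
    exact (key R a b c).symm
  · intro g h _ _ pg ph b
    rw [Equiv.Perm.mul_apply, pg, ph]
  · intro g _ pg b
    have := pg (g⁻¹ b)
    rw [show g (g⁻¹ b) = b from Equiv.apply_symm_apply g b] at this
    exact this.symm

lemma rel_op {x z : X} (h : rel R x z) (y : X) : rel R x (R.op z y) :=
  rel_trans R h ⟨σ R y, σ_mem R y, rfl⟩

lemma rel_inv {x z : X} (h : rel R x z) (y : X) : rel R x ((σ R y)⁻¹ z) :=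
  rel_trans R h (rel_symm R ⟨σ R y, σ_mem R y, Equiv.apply_symm_apply _ _⟩)

open Classical in
/-- The restriction of right translation by `y` to the class of `x`. -/
noncomputable def ff (x y : X) : Equiv.Perm X where
  toFun z := if rel R x z then R.op z y else z
  invFun z := if rel R x z then (σ R y)⁻¹ z else z
  left_inv z := by
    dsimp only
    by_cases h : rel R x z
    · rw [if_pos h, if_pos (rel_op R h y)]
      exact Equiv.symm_apply_apply (σ R y) z
    · rw [if_neg h, if_neg h]
  right_inv z := by
    dsimp only
    by_cases h : rel R x z
    · rw [if_pos h, if_pos (rel_inv R h y)]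
      exact Equiv.apply_symm_apply (σ R y) z
    · rw [if_neg h, if_neg h]

open Classical in
lemma ff_apply (x y z : X) : ff R x y z = if rel R x z then R.op z y else z := rfl

lemma rel_congr {x x' : X} (h : rel R x x') (z : X) : rel R x z ↔ rel R x' z :=
  ⟨fun hz => rel_trans R (rel_symm R h) hz, fun hz => rel_trans R h hz⟩

lemma ff_congr {x x' y y' : X} (hx : rel R x x') (hy : rel R y y') :
    ff R x y = ff R x' y' := by
  obtain ⟨g, hg, rfl⟩ := hy
  have hσ : σ R (g y) = σ R y := σ_const R hg y
  apply Equiv.ext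
  intro z
  rw [ff_apply, ff_apply]
  by_cases h : rel R x z
  · rw [if_pos h, if_pos ((rel_congr R hx z).mp h)]
    exact (DFunLike.congr_fun hσ z).symm
  · rw [if_neg h, if_neg (fun hc => h ((rel_congr R hx z).mpr hc))]

lemma ff_comm (x y y' : X) : ff R x y * ff R x y' = ff R x y' * ff R x y := by
  apply Equiv.ext
  intro z
  simp only [Equiv.Perm.mul_apply, ff_apply]
  by_cases h : rel R x z
  · rw [if_pos h, if_pos h, if_pos (rel_op R h y'), if_pos (rel_op R h y)]
    exact R.abelian z y' y
  · rw [if_neg h, if_neg h, if_neg h]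

lemma lift (x : X) {g : Equiv.Perm X} (hg : g ∈ G R) :
    ∃ g' ∈ Subgroup.closure (Set.range (ff R x)), ∀ w, rel R x w → g' w = g w := by
  refine Subgroup.closure_induction ?_ ?_ ?_ ?_ hg
  · rintro h ⟨y, rfl⟩
    refine ⟨ff R x y, Subgroup.subset_closure ⟨y, rfl⟩, fun w hw => ?_⟩
    rw [ff_apply, if_pos hw]; rfl
  · exact ⟨1, one_mem _, fun w _ => rfl⟩
  · rintro g h hgm hhm ⟨g', hg', pg⟩ ⟨h', hh', ph⟩
    refine ⟨g' * h', mul_mem hg' hh', fun w hw => ?_⟩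
    rw [Equiv.Perm.mul_apply, Equiv.Perm.mul_apply, ph w hw,
      pg (h w) (rel_trans R hw (mem_G_rel R hhm w))]
  · rintro g hgm ⟨g', hg', pg⟩
    refine ⟨g'⁻¹, inv_mem hg', fun w hw => ?_⟩
    have h1 : rel R x (g⁻¹ w) := rel_trans R hw (mem_G_rel R (inv_mem hgm) w)
    have h2 := pg _ h1
    rw [show g (g⁻¹ w) = w from Equiv.apply_symm_apply g w] at h2
    calc g'⁻¹ w = g'⁻¹ (g' (g⁻¹ w)) := by rw [h2]
      _ = g⁻¹ w := Equiv.symm_apply_apply _ _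

lemma ff_trans (x a b : X) (ha : rel R x a) (hb : rel R x b) :
    ∃ g ∈ Subgroup.closure (Set.range (ff R x)), g a = b := by
  obtain ⟨g, hg, rfl⟩ := ha
  obtain ⟨h, hh, rfl⟩ := hb
  obtain ⟨g', hg', pg⟩ := lift R x (mul_mem hh (inv_mem hg))
  refine ⟨g', hg', ?_⟩
  rw [pg _ (⟨g, hg, rfl⟩ : rel R x (g x)), Equiv.Perm.mul_apply,
    show h (g⁻¹ (g x)) = h x from by rw [show g⁻¹ (g x) = x from Equiv.symm_apply_apply g x]]

lemma ff_range_comm : ∀ a ∈ Set.range (ff R x), ∀ b ∈ Set.range (ff R x), Commute a b := by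
  rintro a ⟨y, rfl⟩ b ⟨y', rfl⟩
  exact ff_comm R x y y'

lemma ff_free (x : X) {g : Equiv.Perm X}
    (hg : g ∈ Subgroup.closure (Set.range (ff R x)))
    (ha : ∃ a, rel R x a ∧ g a = a) : ∀ b, rel R x b → g b = b := by
  obtain ⟨a, hxa, hfix⟩ := ha
  intro b hxb
  obtain ⟨h, hh, hab⟩ := ff_trans R x a b hxa hxb
  have hc : Commute g h := commute_closure (ff_range_comm R) g hg h hh
  calc g b = g (h a) := by rw [hab]
    _ = h (g a) := by rw [← Equiv.Perm.mul_apply, hc.eq, Equiv.Perm.mul_apply]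
    _ = b := by rw [hfix, hab]

/-- The forward map of the classification. -/
noncomputable def F : AbelianRackData X where
  rel := rel R
  equiv := rel_equiv R
  f := ff R
  congr := fun _ _ _ _ hx hy => ff_congr R hx hy
  fix_outside := fun x y z h => by rw [ff_apply, if_neg h]
  maps_class := fun x y z h => by rw [ff_apply, if_pos h]; exact rel_op R h y
  comm := ff_comm R
  trans := ff_trans R
  free := ff_free R

section Back

variable [Fintype X] (D : AbelianRackData X)

/-- The rack operation built from the data. -/
def Bop (x y : X) : X := D.f x y x

lemma Bop_rel (x y : X) : D.rel x (Bop D x y) := D.maps_class x y x (D.equiv.refl x)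

lemma Bop_eq1 (x y z : X) : Bop D (Bop D x y) z = D.f x z (D.f x y x) := by
  unfold Bop
  rw [D.congr (D.f x y x) x z z (D.equiv.symm (Bop_rel D x y)) (D.equiv.refl z)]

lemma comm_apply (x y y' z : X) : D.f x y (D.f x y' z) = D.f x y' (D.f x y z) := by
  have := DFunLike.congr_fun (D.comm x y y') z
  simpa [Equiv.Perm.mul_apply] using this

lemma Bop_sd (x y z : X) : Bop D (Bop D x y) z = Bop D (Bop D x z) (Bop D y z) := by
  rw [Bop_eq1]
  have h1 : D.rel (Bop D x z) x := D.equiv.symm (Bop_rel D x z)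
  have h2 : D.rel (Bop D y z) y := D.equiv.symm (Bop_rel D y z)
  show _ = D.f (Bop D x z) (Bop D y z) (Bop D x z)
  rw [D.congr (Bop D x z) x (Bop D y z) y h1 h2]
  show D.f x z (D.f x y x) = D.f x y (D.f x z x)
  exact comm_apply D x z y x

lemma Bop_ab (a b c : X) : Bop D (Bop D a b) c = Bop D (Bop D a c) b := by
  rw [Bop_eq1, Bop_eq1]
  exact comm_apply D a c b a

lemma Bop_inj (y : X) : Function.Injective fun x => Bop D x y := by
  intro a b h
  simp only [Bop] at h
  have hab : D.rel a b := by
    have h1 : D.rel a (D.f a y a) := Bop_rel D a y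
    have h2 : D.rel b (D.f b y b) := Bop_rel D b y
    rw [h] at h1
    exact D.equiv.trans h1 (D.equiv.symm h2)
  rw [D.congr a b y y hab (D.equiv.refl y)] at h
  exact (D.f b y).injective h

/-- The backward map of the classification. -/
def B : AbelianRack X where
  op := Bop D
  self_distrib := Bop_sd D
  bij := fun y => Finite.injective_iff_bijective.mp (Bop_inj D y)
  abelian := Bop_ab D

lemma σB_apply (y z : X) : σ (B D) y z = D.f z y z := rfl

lemma L1 {g : Equiv.Perm X} (hg : g ∈ G (B D)) : ∀ z, D.rel z (g z) := by
  refine Subgroup.closure_induction ?_ (fun z => D.equiv.refl z) ?_ ?_ hg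
  · rintro h ⟨y, rfl⟩ z
    exact D.maps_class z y z (D.equiv.refl z)
  · intro g h _ _ pg ph z
    rw [Equiv.Perm.mul_apply]
    exact D.equiv.trans (ph z) (pg (h z))
  · intro g _ pg z
    have := pg (g⁻¹ z)
    rw [show g (g⁻¹ z) = z from Equiv.apply_symm_apply g z] at this
    exact D.equiv.symm this

lemma L2 (x : X) {g : Equiv.Perm X}
    (hg : g ∈ Subgroup.closure (Set.range (D.f x))) :
    (∀ w, D.rel x w → D.rel x (g w) ∧ rel (B D) w (g w)) ∧
      (∀ w, ¬ D.rel x w → g w = w) := by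
  refine Subgroup.closure_induction ?_ ?_ ?_ ?_ hg
  · rintro h ⟨y, rfl⟩
    constructor
    · intro w hw
      refine ⟨D.maps_class x y w hw, ?_⟩
      have he : D.f x y w = σ (B D) y w := by
        rw [D.congr x w y y hw (D.equiv.refl y)]; rfl
      rw [he]
      exact mem_G_rel (B D) (σ_mem (B D) y) w
    · exact fun w hw => D.fix_outside x y w hw
  · exact ⟨fun w hw => ⟨hw, rel_refl _ w⟩, fun w _ => rfl⟩
  · rintro g h _ _ ⟨pg1, pg2⟩ ⟨ph1, ph2⟩
    constructor
    · intro w hw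
      have h1 := ph1 w hw
      have h2 := pg1 (h w) h1.1
      refine ⟨?_, ?_⟩
      · rw [Equiv.Perm.mul_apply]; exact h2.1
      · rw [Equiv.Perm.mul_apply]; exact rel_trans _ h1.2 h2.2
    · intro w hw
      rw [Equiv.Perm.mul_apply, ph2 w hw, pg2 w hw]
  · rintro g _ ⟨pg1, pg2⟩
    have hfix : ∀ w, ¬ D.rel x w → g⁻¹ w = w := by
      intro w hw
      calc g⁻¹ w = g⁻¹ (g w) := by rw [pg2 w hw]
        _ = w := Equiv.symm_apply_apply g w
    refine ⟨?_, hfix⟩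
    intro w hw
    have hrel : D.rel x (g⁻¹ w) := by
      by_contra hcon
      have h2 := pg2 (g⁻¹ w) hcon
      rw [show g (g⁻¹ w) = w from Equiv.apply_symm_apply g w] at h2
      exact hcon (h2 ▸ hw)
    refine ⟨hrel, ?_⟩
    have h3 := (pg1 (g⁻¹ w) hrel).2
    rw [show g (g⁻¹ w) = w from Equiv.apply_symm_apply g w] at h3
    exact rel_symm _ h3

lemma rel_eq : rel (B D) = D.rel := by
  funext x z
  apply propext
  constructor
  · rintro ⟨g, hg, rfl⟩
    exact L1 D hg x
  · intro h
    obtain ⟨g, hg, hgx⟩ := D.trans x x z (D.equiv.refl x) h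
    have h2 := ((L2 D x hg).1 x (D.equiv.refl x)).2
    rwa [hgx] at h2

lemma f_eq (x y : X) : ff (B D) x y = D.f x y := by
  apply Equiv.ext
  intro z
  by_cases h : D.rel x z
  · have h' : rel (B D) x z := by rw [rel_eq D]; exact h
    rw [ff_apply, if_pos h']
    show D.f z y z = D.f x y z
    rw [D.congr z x y y (D.equiv.symm h) (D.equiv.refl y)]
  · have h' : ¬ rel (B D) x z := by rw [rel_eq D]; exact h
    rw [ff_apply, if_neg h', D.fix_outside x y z h]

end Back

end RackAux

/-- Finite abelian racks on `X` are in one-to-one correspondence with partitions of `X`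
together with families of permutations `f_{ij}` as above; under the correspondence the
rack operation is `x ◁ y = f_{[x][y]}(x)`, and the rack is a quandle (`x ◁ x = x`)
exactly when each `f_{ii}` is the identity on its part. -/
theorem abelianRack_classification (X : Type*) [Fintype X] :
    ∃ e : AbelianRack X ≃ AbelianRackData X,
      (∀ R : AbelianRack X, ∀ x y : X, R.op x y = (e R).f x y x) ∧
      (∀ R : AbelianRack X,
        (∀ x, R.op x x = x) ↔ ∀ x z, (e R).rel x z → (e R).f x x z = z) := by
  refine ⟨⟨RackAux.F, RackAux.B, ?_, ?_⟩, ?_, ?_⟩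
  · intro R
    apply RackAux.rack_ext
    funext x y
    show RackAux.ff R x y x = R.op x y
    rw [RackAux.ff_apply, if_pos (RackAux.rel_refl R x)]
  · intro D
    apply RackAux.data_ext
    · exact RackAux.rel_eq D
    · funext x y
      exact RackAux.f_eq D x y
  · intro R x y
    show R.op x y = RackAux.ff R x y x
    rw [RackAux.ff_apply, if_pos (RackAux.rel_refl R x)]
  · intro R
    constructor
    · intro hq x z hz
      have hz' : RackAux.rel R x z := hz
      show RackAux.ff R x x z = z
      rw [RackAux.ff_apply, if_pos hz']
      obtain ⟨g, hg, rfl⟩ := hz'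
      have h1 : R.op (g x) x = R.op (g x) (g x) :=
        (DFunLike.congr_fun (RackAux.σ_const R hg x) (g x)).symm
      rw [h1, hq]
    · intro h x
      have h2 : RackAux.ff R x x x = x := h x x (RackAux.rel_refl R x)
      rwa [RackAux.ff_apply, if_pos (RackAux.rel_refl R x)] at h2
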